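/- For j ≥ 2, let μ_j(τ) > 0 be the unique solution of √μ + arctan(τ tanh τ/√μ) = (π/2)j with (π/2)(j−1) < √μ < (π/2)j. Then (π/2)(j−1) ≤ √(μ_j(τ)) ≤ (π/2)(j−1) + arctan(πj/(2τ tanh τ)), and consequently √(μ_j(τ)) → (π/2)(j−1) as τ → ∞. -/

import Mathlib

open Real Filter

lemma tanh_pos_of_pos {x : ℝ} (hx : 0 < x) : 0 < Real.tanh x := by
  rw [Real.tanh_eq_sinh_div_cosh]
  exact div_pos (by rwa [Real.sinh_pos_iff]) (Real.cosh_pos x)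

lemma half_le_tanh {x : ℝ} (hx : 1 ≤ x) : 1/2 ≤ Real.tanh x := by
  rw [Real.tanh_eq_sinh_div_cosh, Real.sinh_eq, Real.cosh_eq, le_div_iff₀ (by positivity)]
  have h1 : (3 : ℝ) ≤ Real.exp 1 ^ 2 := by
    nlinarith [Real.add_one_le_exp 1, Real.exp_pos 1]
  have h2 : (3 : ℝ) * Real.exp (-x) ≤ Real.exp x := by
    rw [Real.exp_neg, ← sub_nonneg]
    have hx2 : Real.exp 1 ^ 2 ≤ Real.exp x ^ 2 := by
      have := Real.exp_le_exp.mpr hx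
      nlinarith [Real.exp_pos 1]
    have := Real.exp_pos x
    have h3 : 3 * (rexp x)⁻¹ ≤ rexp x := by
      rw [inv_eq_one_div, mul_one_div, div_le_iff₀ this]
      nlinarith
    linarith
  linarith

theorem eigenvalue_asymptotics_large_tau (j : ℕ) (hj : 2 ≤ j) (μ : ℝ → ℝ)
    (hμ : ∀ τ : ℝ, 0 < τ →
      0 < μ τ ∧
      Real.pi / 2 * ((j : ℝ) - 1) < Real.sqrt (μ τ) ∧
      Real.sqrt (μ τ) < Real.pi / 2 * (j : ℝ) ∧
      Real.sqrt (μ τ) + Real.arctan (τ * Real.tanh τ / Real.sqrt (μ τ)) =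
        Real.pi / 2 * (j : ℝ)) :
    (∀ τ : ℝ, 0 < τ →
      Real.pi / 2 * ((j : ℝ) - 1) ≤ Real.sqrt (μ τ) ∧
      Real.sqrt (μ τ) ≤ Real.pi / 2 * ((j : ℝ) - 1) +
        Real.arctan (Real.pi * (j : ℝ) / (2 * τ * Real.tanh τ))) ∧
    Filter.Tendsto (fun τ => Real.sqrt (μ τ)) Filter.atTop
      (nhds (Real.pi / 2 * ((j : ℝ) - 1))) := by
  have key : ∀ τ : ℝ, 0 < τ →
      Real.pi / 2 * ((j : ℝ) - 1) ≤ Real.sqrt (μ τ) ∧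
      Real.sqrt (μ τ) ≤ Real.pi / 2 * ((j : ℝ) - 1) +
        Real.arctan (Real.pi * (j : ℝ) / (2 * τ * Real.tanh τ)) := by
    intro τ hτ
    obtain ⟨hpos, hlow, hup, heq⟩ := hμ τ hτ
    set s := Real.sqrt (μ τ) with hs
    have hspos : 0 < s := Real.sqrt_pos.mpr hpos
    have ha : 0 < τ * Real.tanh τ := mul_pos hτ (tanh_pos_of_pos hτ)
    have hinv : τ * Real.tanh τ / s = (s / (τ * Real.tanh τ))⁻¹ := by
      rw [inv_div]
    have harc : Real.arctan (τ * Real.tanh τ / s) =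
        Real.pi / 2 - Real.arctan (s / (τ * Real.tanh τ)) := by
      rw [hinv, Real.arctan_inv_of_pos (div_pos hspos ha)]
    have hseq : s = Real.pi / 2 * ((j : ℝ) - 1) +
        Real.arctan (s / (τ * Real.tanh τ)) := by
      rw [harc] at heq; ring_nf at heq ⊢; linarith
    constructor
    · exact le_of_lt hlow
    · rw [hseq]
      gcongr _ + ?_
      apply Real.arctan_strictMono.monotone
      rw [div_le_div_iff₀ ha (by linarith : (0:ℝ) < 2 * τ * Real.tanh τ)]
      nlinarith [ha, le_of_lt hup]
  refine ⟨key, ?_⟩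
  have hub : Tendsto (fun τ : ℝ => Real.pi / 2 * ((j : ℝ) - 1) +
      Real.arctan (Real.pi * (j : ℝ) / (2 * τ * Real.tanh τ))) atTop
      (nhds (Real.pi / 2 * ((j : ℝ) - 1))) := by
    have h0 : Tendsto (fun τ : ℝ => Real.pi * (j : ℝ) / (2 * τ * Real.tanh τ))
        atTop (nhds 0) := by
      apply squeeze_zero' (g := fun τ : ℝ => Real.pi * (j : ℝ) / τ)
      · filter_upwards [eventually_ge_atTop (1 : ℝ)] with τ hτ
        have ht : 0 < Real.tanh τ := tanh_pos_of_pos (by linarith)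
        positivity
      · filter_upwards [eventually_ge_atTop (1 : ℝ)] with τ hτ
        have hτ0 : (0:ℝ) < τ := by linarith
        have ht := half_le_tanh hτ
        apply div_le_div_of_nonneg_left (by positivity) hτ0
        nlinarith
      · exact tendsto_const_nhds.div_atTop tendsto_id
    have := (Real.continuous_arctan.tendsto 0).comp h0
    have h2 : Tendsto (fun τ : ℝ => Real.pi / 2 * ((j:ℝ) - 1) +
        Real.arctan (Real.pi * (j : ℝ) / (2 * τ * Real.tanh τ))) atTop
        (nhds (Real.pi / 2 * ((j:ℝ) - 1) + 0)) :=
      tendsto_const_nhds.add (by simpa [Function.comp_def] using this)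
    simpa using h2
  apply tendsto_of_tendsto_of_tendsto_of_le_of_le' tendsto_const_nhds hub
  · filter_upwards [eventually_gt_atTop (0 : ℝ)] with τ hτ
    exact (key τ hτ).1
  · filter_upwards [eventually_gt_atTop (0 : ℝ)] with τ hτ
    exact (key τ hτ).2
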